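/- Let H be a Hilbert space, let T, T_a (for a in a finite index set A) be bounded invertible linear operators on H with ‖T_a − T‖ ≤ η for all a ∈ A and ‖T^{-1}‖ ≤ s with s·η < 1. Let w_a ≥ 0 with Σ_a w_a = 1 and set T_A := Σ_a w_a T_a. Given vectors δ_a ∈ H and δ_A ∈ H satisfying T_A(δ_A) = Σ_a w_a T_a(δ_a), with ‖δ_a‖ ≤ η_δ for all a, and assuming T_A is invertible, one has ‖δ_A − Σ_a w_a δ_a‖ ≤ (2·s·η / (1 − s·η)) · η_δ. -/

import Mathlib

set_option maxHeartbeats 1000000 in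


/-- Transfer of functional similarity through an aggregated operator:
if `T` and the `T a` are invertible with `‖T⁻¹‖ ≤ s`, `‖T a − T‖ ≤ η` and `s·η < 1`,
`w` is a probability weight vector, `T_A := ∑ a, w a • T a` is invertible, and the
vectors `δ a`, `δA` satisfy `T_A δA = ∑ a, w a • T a (δ a)` with `‖δ a‖ ≤ ηδ`,
then `‖δA − ∑ a, w a • δ a‖ ≤ (2·s·η/(1 − s·η))·ηδ`. -/
theorem aggregated_deviation_bound {H : Type*} [NormedAddCommGroup H]
    [InnerProductSpace ℝ H] [CompleteSpace H] {ι : Type*} [Fintype ι]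
    (T : H →L[ℝ] H) (Ta : ι → H →L[ℝ] H) (T' TA' : H →L[ℝ] H)
    (hT1 : T.comp T' = ContinuousLinearMap.id ℝ H)
    (hT2 : T'.comp T = ContinuousLinearMap.id ℝ H)
    (hTainv : ∀ a, ∃ Ta' : H →L[ℝ] H,
      (Ta a).comp Ta' = ContinuousLinearMap.id ℝ H ∧
      Ta'.comp (Ta a) = ContinuousLinearMap.id ℝ H)
    (s η ηδ : ℝ) (hs : ‖T'‖ ≤ s) (hη : ∀ a, ‖Ta a - T‖ ≤ η) (hsη : s * η < 1)
    (w : ι → ℝ) (hw : ∀ a, 0 ≤ w a) (hw1 : ∑ a, w a = 1)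
    (hTA1 : (∑ a, w a • Ta a).comp TA' = ContinuousLinearMap.id ℝ H)
    (hTA2 : TA'.comp (∑ a, w a • Ta a) = ContinuousLinearMap.id ℝ H)
    (δ : ι → H) (δA : H)
    (heq : (∑ a, w a • Ta a) δA = ∑ a, w a • (Ta a (δ a)))
    (hδ : ∀ a, ‖δ a‖ ≤ ηδ) :
    ‖δA - ∑ a, w a • δ a‖ ≤ 2 * s * η / (1 - s * η) * ηδ := by

  classical
  have hne : Nonempty ι := by
    rcases isEmpty_or_nonempty ι with h | h
    · simp [Finset.univ_eq_empty] at hw1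
    · exact h
  obtain ⟨a0⟩ := hne
  have hη0 : 0 ≤ η := le_trans (norm_nonneg _) (hη a0)
  have hs0 : 0 ≤ s := le_trans (norm_nonneg _) hs
  have hηδ0 : 0 ≤ ηδ := le_trans (norm_nonneg _) (hδ a0)
  have h1pos : 0 < 1 - s * η := by linarith
  set TA : H →L[ℝ] H := ∑ a, w a • Ta a with hTAdef
  set D : H := ∑ a, w a • δ a with hDdef
  -- bound on ‖TA - T‖
  have hEdec : TA - T = ∑ a, w a • (Ta a - T) := by
    simp [hTAdef, smul_sub, Finset.sum_sub_distrib, ← Finset.sum_smul, hw1]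
  have hE : ‖TA - T‖ ≤ η := by
    rw [hEdec]
    calc ‖∑ a, w a • (Ta a - T)‖ ≤ ∑ a, ‖w a • (Ta a - T)‖ := norm_sum_le _ _
      _ ≤ ∑ a, w a * η := by
          refine Finset.sum_le_sum fun a _ => ?_
          calc ‖w a • (Ta a - T)‖ ≤ ‖w a‖ * ‖Ta a - T‖ :=
                ContinuousLinearMap.opNorm_smul_le _ _
            _ = w a * ‖Ta a - T‖ := by rw [Real.norm_of_nonneg (hw a)]
            _ ≤ w a * η := mul_le_mul_of_nonneg_left (hη a) (hw a)
      _ = η := by rw [← Finset.sum_mul, hw1, one_mul]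
  -- bound on ‖TA'‖
  have hT1' : T * T' = 1 := hT1
  have hTA2' : TA' * TA = 1 := hTA2
  have key : TA' = T' - TA' * ((TA - T) * T') := by
    calc TA' = TA' * (T * T') := by rw [hT1', mul_one]
      _ = (TA' * TA) * T' - TA' * ((TA - T) * T') := by noncomm_ring
      _ = T' - TA' * ((TA - T) * T') := by rw [hTA2', one_mul]
  have hTA'b : ‖TA'‖ ≤ s / (1 - s * η) := by
    have h2 : ‖TA'‖ ≤ s + ‖TA'‖ * (η * s) := by
      calc ‖TA'‖ = ‖T' - TA' * ((TA - T) * T')‖ := by rw [← key]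
        _ ≤ ‖T'‖ + ‖TA' * ((TA - T) * T')‖ := norm_sub_le _ _
        _ ≤ ‖T'‖ + ‖TA'‖ * (‖TA - T‖ * ‖T'‖) :=
            add_le_add_right (le_trans (norm_mul_le _ _)
              (mul_le_mul_of_nonneg_left (norm_mul_le _ _) (norm_nonneg _))) _
        _ ≤ s + ‖TA'‖ * (η * s) := by gcongr
    rw [le_div_iff₀ h1pos]
    nlinarith [norm_nonneg TA']
  -- bound on ‖D‖
  have hD : ‖D‖ ≤ ηδ := by
    rw [hDdef]
    calc ‖∑ a, w a • δ a‖ ≤ ∑ a, ‖w a • δ a‖ := norm_sum_le _ _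
      _ ≤ ∑ a, w a * ηδ := by
          refine Finset.sum_le_sum fun a _ => ?_
          rw [norm_smul, Real.norm_of_nonneg (hw a)]
          exact mul_le_mul_of_nonneg_left (hδ a) (hw a)
      _ = ηδ := by rw [← Finset.sum_mul, hw1, one_mul]
  -- decomposition of TA (δA - D)
  have hTD : T D = ∑ a, w a • T (δ a) := by
    rw [hDdef, map_sum]; simp
  have hTAx : TA (δA - D) = (∑ a, w a • ((Ta a - T) (δ a))) - (TA - T) D := by
    rw [map_sub, heq]
    simp only [ContinuousLinearMap.sub_apply, smul_sub, Finset.sum_sub_distrib]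
    rw [← hTD]
    abel
  have hTAxb : ‖TA (δA - D)‖ ≤ 2 * η * ηδ := by
    rw [hTAx]
    calc ‖(∑ a, w a • ((Ta a - T) (δ a))) - (TA - T) D‖
        ≤ ‖∑ a, w a • ((Ta a - T) (δ a))‖ + ‖(TA - T) D‖ := norm_sub_le _ _
      _ ≤ η * ηδ + η * ηδ := by
          refine add_le_add ?_ ?_
          · calc ‖∑ a, w a • ((Ta a - T) (δ a))‖
                ≤ ∑ a, ‖w a • ((Ta a - T) (δ a))‖ := norm_sum_le _ _
              _ ≤ ∑ a, w a * (η * ηδ) := by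
                  refine Finset.sum_le_sum fun a _ => ?_
                  rw [norm_smul _ ((Ta a - T) (δ a)), Real.norm_of_nonneg (hw a)]
                  refine mul_le_mul_of_nonneg_left ?_ (hw a)
                  exact le_trans ((Ta a - T).le_opNorm _)
                    (mul_le_mul (hη a) (hδ a) (norm_nonneg _) hη0)
              _ = η * ηδ := by rw [← Finset.sum_mul, hw1, one_mul]
          · exact le_trans ((TA - T).le_opNorm _)
              (mul_le_mul hE hD (norm_nonneg _) hη0)
      _ = 2 * η * ηδ := by ring
  -- conclude
  have hfix : TA' (TA (δA - D)) = δA - D := by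
    have := DFunLike.congr_fun hTA2 (δA - D)
    simpa using this
  calc ‖δA - D‖ = ‖TA' (TA (δA - D))‖ := by rw [hfix]
    _ ≤ ‖TA'‖ * ‖TA (δA - D)‖ := TA'.le_opNorm _
    _ ≤ (s / (1 - s * η)) * (2 * η * ηδ) := by
        refine mul_le_mul hTA'b hTAxb (norm_nonneg _) ?_
        positivity
    _ = 2 * s * η / (1 - s * η) * ηδ := by
        field_simp
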